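/- (Gladyshev, boundedness part) Let f: ℝ^d → ℝ^d satisfy f(θ*) = 0, ‖f(θ)‖ ≤ K‖θ−θ*‖ for all θ, and ⟨θ−θ*, f(θ)⟩ ≤ 0 for all θ. Let θ_{t+1} = θ_t + α_t(f(θ_t) + ξ_{t+1}) with α_t ∈ (0,1), ∑_t α_t² < ∞, and noise satisfying E[ξ_{t+1}|F_t] = 0 and E[‖ξ_{t+1}‖²|F_t] ≤ σ²(1+‖θ_t−θ*‖²) a.s. Then the sequence (θ_t) is bounded almost surely: P(sup_t ‖θ_t‖ < ∞) = 1. -/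

import Mathlib

open MeasureTheory Filter

lemma stmt19_coord_abs_le_norm {d : ℕ} (x : EuclideanSpace ℝ (Fin d)) (i : Fin d) :
    |x i| ≤ ‖x‖ := by
  rw [EuclideanSpace.norm_eq]
  rw [show |x i| = Real.sqrt (|x i| ^ 2) by rw [Real.sqrt_sq_eq_abs, abs_abs]]
  apply Real.sqrt_le_sqrt
  have h : |x i| ^ 2 = ‖x i‖ ^ 2 := by rw [Real.norm_eq_abs]
  rw [h]
  exact Finset.single_le_sum (fun j _ => sq_nonneg ‖x j‖) (Finset.mem_univ i)

lemma stmt19_inner_eq_sum {d : ℕ} (x y : EuclideanSpace ℝ (Fin d)) :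
    (inner ℝ x y : ℝ) = ∑ i, x i * y i := by
  simp [PiLp.inner_apply, RCLike.inner_apply, mul_comm]

set_option maxHeartbeats 2000000 in
theorem stmt_19 {d : ℕ} {Ω : Type*} {m0 : MeasurableSpace Ω} {μ : Measure Ω}
    [IsProbabilityMeasure μ] (F : Filtration ℕ m0)
    (f : EuclideanSpace ℝ (Fin d) → EuclideanSpace ℝ (Fin d))
    (θstar : EuclideanSpace ℝ (Fin d)) (K σ : ℝ)
    (hzero : f θstar = 0)
    (hgrowth : ∀ θ, ‖f θ‖ ≤ K * ‖θ - θstar‖)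
    (hpassive : ∀ θ, (inner ℝ (θ - θstar) (f θ) : ℝ) ≤ 0)
    (α : ℕ → ℝ) (hα : ∀ t, α t ∈ Set.Ioo (0:ℝ) 1)
    (hα2 : Summable (fun t => (α t) ^ 2))
    (θ : ℕ → Ω → EuclideanSpace ℝ (Fin d))
    (ξ : ℕ → Ω → EuclideanSpace ℝ (Fin d))
    (hθ_adapted : Adapted F θ)
    (hξ_adapted : ∀ t : ℕ, Measurable[F (t + 1)] (ξ (t + 1)))
    (hrec : ∀ (t : ℕ) (ω : Ω),
      θ (t + 1) ω = θ t ω + α t • (f (θ t ω) + ξ (t + 1) ω))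
    (hξ_int : ∀ t : ℕ, Integrable (ξ (t + 1)) μ)
    (hξ_sq_int : ∀ t : ℕ, Integrable (fun ω => ‖ξ (t + 1) ω‖ ^ 2) μ)
    (hmean : ∀ t : ℕ, μ[ξ (t + 1) | F t] =ᵐ[μ] 0)
    (hvar : ∀ t : ℕ, μ[fun ω => ‖ξ (t + 1) ω‖ ^ 2 | F t] ≤ᵐ[μ]
        fun ω => σ ^ 2 * (1 + ‖θ t ω - θstar‖ ^ 2)) :
    ∀ᵐ ω ∂μ, ∃ C : ℝ, ∀ t : ℕ, ‖θ t ω‖ ≤ C := by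
  classical
  have hσ2 : (0:ℝ) ≤ σ ^ 2 := sq_nonneg σ
  have hK2 : (0:ℝ) ≤ K ^ 2 := sq_nonneg K
  set c : ℝ := 2 * K ^ 2 + 2 * σ ^ 2 with hc
  have hc0 : 0 ≤ c := by positivity
  set S : ℝ := ∑' t, (α t) ^ 2 with hS
  have hKb : ∀ x : EuclideanSpace ℝ (Fin d), 0 ≤ K * ‖x - θstar‖ :=
    fun x => (norm_nonneg _).trans (hgrowth x)
  have hfsq : ∀ x : EuclideanSpace ℝ (Fin d), ‖f x‖ ^ 2 ≤ K ^ 2 * ‖x - θstar‖ ^ 2 := by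
    intro x
    have h1 := hgrowth x
    have h2 := norm_nonneg (f x)
    nlinarith
  -- measurability of the processes w.r.t. the filtration
  have hb_m : ∀ t, Measurable[F t] (fun ω => θ t ω - θstar) := fun t =>
    (hθ_adapted t).sub measurable_const
  have hcoord_m : ∀ i : Fin d, Measurable (fun x : EuclideanSpace ℝ (Fin d) => x i) := by
    intro i
    exact (measurable_pi_apply i).comp (WithLp.measurable_ofLp 2 _)
  -- reduce to a.e. statement on the events `‖θ 0‖ ≤ n`
  suffices h : ∀ n : ℕ, ∀ᵐ ω ∂μ, ‖θ 0 ω‖ ≤ (n:ℝ) → ∃ C : ℝ, ∀ t : ℕ, ‖θ t ω‖ ≤ C by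
    have h' := ae_all_iff.2 h
    filter_upwards [h'] with ω hω
    obtain ⟨n, hn⟩ := exists_nat_ge ‖θ 0 ω‖
    exact hω n hn
  intro n
  set A : Set Ω := {ω | ‖θ 0 ω‖ ≤ (n:ℝ)} with hA
  have hAmeas : MeasurableSet[F 0] A := by
    have hA' : A = (θ 0) ⁻¹' (Metric.closedBall 0 (n:ℝ)) := by
      ext ω; simp [hA, Metric.mem_closedBall, dist_zero_right]
    rw [hA']
    exact (hθ_adapted 0) measurableSet_closedBall
  set I : Ω → ℝ := A.indicator (fun _ => (1:ℝ)) with hI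
  have hI_nonneg : ∀ ω, 0 ≤ I ω := fun ω => Set.indicator_nonneg (fun _ _ => zero_le_one) ω
  have hI_le_one : ∀ ω, I ω ≤ 1 := by
    intro ω; by_cases hω : ω ∈ A <;> simp [hI, hω]
  have hImem : ∀ ω ∈ A, I ω = 1 := fun ω h => by simp [hI, h]
  have hInot : ∀ ω, ω ∉ A → I ω = 0 := fun ω h => by simp [hI, h]
  have hI_m : Measurable[F 0] I := measurable_const.indicator hAmeas
  have hI_mt : ∀ t, Measurable[F t] I := fun t => hI_m.mono (F.mono (Nat.zero_le t)) le_rfl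
  set W : ℕ → Ω → ℝ := fun t ω => I ω * ‖θ t ω - θstar‖ ^ 2 with hW
  have hW_nonneg : ∀ t ω, 0 ≤ W t ω := fun t ω => mul_nonneg (hI_nonneg ω) (sq_nonneg _)
  have hW_m : ∀ t, Measurable[F t] (W t) := by
    intro t
    letI : MeasurableSpace Ω := F t
    exact (hI_mt t).mul ((hb_m t).norm.pow_const 2)
  have hW_m0 : ∀ t, Measurable (W t) := fun t => (hW_m t).mono (F.le t) le_rfl
  -- integrability of W by induction
  have hW_int : ∀ t, Integrable (W t) μ := by
    intro t
    induction t with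
    | zero =>
      refine Integrable.mono' (integrable_const (((n:ℝ) + ‖θstar‖) ^ 2))
        ((hW_m0 0).aestronglyMeasurable) (ae_of_all _ ?_)
      intro ω
      rw [Real.norm_of_nonneg (hW_nonneg 0 ω)]
      by_cases hω : ω ∈ A
      · have h1 : I ω = 1 := hImem ω hω
        have h2 : ‖θ 0 ω‖ ≤ (n:ℝ) := hω
        have h3 : ‖θ 0 ω - θstar‖ ≤ (n:ℝ) + ‖θstar‖ :=
          (norm_sub_le _ _).trans (by linarith)
        have h4 := norm_nonneg (θ 0 ω - θstar)
        show I ω * ‖θ 0 ω - θstar‖ ^ 2 ≤ _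
        rw [h1, one_mul]
        nlinarith
      · show I ω * ‖θ 0 ω - θstar‖ ^ 2 ≤ _
        rw [hInot ω hω, zero_mul]
        positivity
    | succ t ih =>
      have hg : Integrable (fun ω => 3 * (1 + K ^ 2) * W t ω + 3 * ‖ξ (t+1) ω‖ ^ 2) μ :=
        (ih.const_mul _).add ((hξ_sq_int t).const_mul _)
      refine hg.mono' ((hW_m0 (t+1)).aestronglyMeasurable) (ae_of_all _ ?_)
      intro ω
      rw [Real.norm_of_nonneg (hW_nonneg (t+1) ω)]
      have hb1 : θ (t+1) ω - θstar = (θ t ω - θstar) + α t • (f (θ t ω) + ξ (t+1) ω) := by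
        rw [hrec t ω]; abel
      have hnb : ‖θ (t+1) ω - θstar‖ ≤ ‖θ t ω - θstar‖ + K * ‖θ t ω - θstar‖ + ‖ξ (t+1) ω‖ := by
        rw [hb1]
        have h6 := norm_add_le (θ t ω - θstar) (α t • (f (θ t ω) + ξ (t+1) ω))
        have h1 : ‖α t • (f (θ t ω) + ξ (t+1) ω)‖ = α t * ‖f (θ t ω) + ξ (t+1) ω‖ := by
          rw [norm_smul, Real.norm_of_nonneg (hα t).1.le]
        have h2 : ‖f (θ t ω) + ξ (t+1) ω‖ ≤ ‖f (θ t ω)‖ + ‖ξ (t+1) ω‖ := norm_add_le _ _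
        have h3 := hgrowth (θ t ω)
        have h4 := (hα t).1.le
        have h5 := (hα t).2.le
        have h7 := norm_nonneg (f (θ t ω))
        have h8 := norm_nonneg (ξ (t+1) ω)
        nlinarith
      have hsq : ‖θ (t+1) ω - θstar‖ ^ 2 ≤
          3 * ‖θ t ω - θstar‖ ^ 2 + 3 * K ^ 2 * ‖θ t ω - θstar‖ ^ 2 + 3 * ‖ξ (t+1) ω‖ ^ 2 := by
        have hp := pow_le_pow_left₀ (norm_nonneg (θ (t+1) ω - θstar)) hnb 2
        nlinarith [sq_nonneg (‖θ t ω - θstar‖ - K * ‖θ t ω - θstar‖),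
          sq_nonneg (‖θ t ω - θstar‖ - ‖ξ (t+1) ω‖),
          sq_nonneg (K * ‖θ t ω - θstar‖ - ‖ξ (t+1) ω‖)]
      by_cases hω : ω ∈ A
      · have h1 : I ω = 1 := hImem ω hω
        show I ω * ‖θ (t+1) ω - θstar‖ ^ 2 ≤ 3 * (1 + K ^ 2) * (I ω * ‖θ t ω - θstar‖ ^ 2) + _
        rw [h1, one_mul, one_mul]
        nlinarith
      · have h1 : I ω = 0 := hInot ω hω
        show I ω * ‖θ (t+1) ω - θstar‖ ^ 2 ≤ 3 * (1 + K ^ 2) * (I ω * ‖θ t ω - θstar‖ ^ 2) + _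
        rw [h1, zero_mul, zero_mul, mul_zero]
        positivity
  -- integrability of the cross terms
  have hcross_bound : ∀ t ω, |I ω * (inner ℝ (θ t ω - θstar) (ξ (t+1) ω) : ℝ)| ≤
      (W t ω + ‖ξ (t+1) ω‖ ^ 2) / 2 := by
    intro t ω
    have h1 : |(inner ℝ (θ t ω - θstar) (ξ (t+1) ω) : ℝ)| ≤ ‖θ t ω - θstar‖ * ‖ξ (t+1) ω‖ :=
      abs_real_inner_le_norm _ _
    rw [abs_mul, abs_of_nonneg (hI_nonneg ω)]
    by_cases hω : ω ∈ A
    · have hIω : I ω = 1 := hImem ω hω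
      have hWω : W t ω = ‖θ t ω - θstar‖ ^ 2 := by
        show I ω * _ = _; rw [hIω, one_mul]
      rw [hIω, one_mul, hWω]
      nlinarith [sq_nonneg (‖θ t ω - θstar‖ - ‖ξ (t+1) ω‖)]
    · have hIω : I ω = 0 := hInot ω hω
      rw [hIω, zero_mul]
      have := hW_nonneg t ω
      positivity
  have hξ_m0 : ∀ t, Measurable (ξ (t+1)) := fun t => (hξ_adapted t).mono (F.le (t+1)) le_rfl
  have hIinner_int : ∀ t,
      Integrable (fun ω => I ω * (inner ℝ (θ t ω - θstar) (ξ (t+1) ω) : ℝ)) μ := by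
    intro t
    have hg : Integrable (fun ω => (W t ω + ‖ξ (t+1) ω‖ ^ 2) / 2) μ :=
      ((hW_int t).add (hξ_sq_int t)).div_const 2
    refine hg.mono' ?_ (ae_of_all _ ?_)
    · have hIm : Measurable I := hI_m.mono (F.le 0) le_rfl
      have hbm : Measurable (fun ω => θ t ω - θstar) := (hb_m t).mono (F.le t) le_rfl
      exact (hIm.mul (hbm.inner (hξ_m0 t))).aestronglyMeasurable
    · intro ω
      rw [Real.norm_eq_abs]
      exact hcross_bound t ω
  have hcross_int : ∀ t (i : Fin d),
      Integrable (fun ω => (I ω * (θ t ω - θstar) i) * ξ (t+1) ω i) μ := by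
    intro t i
    have hg : Integrable (fun ω => (W t ω + ‖ξ (t+1) ω‖ ^ 2) / 2) μ :=
      ((hW_int t).add (hξ_sq_int t)).div_const 2
    refine hg.mono' ?_ (ae_of_all _ ?_)
    · have hIm : Measurable I := hI_m.mono (F.le 0) le_rfl
      have hbm : Measurable (fun ω => (θ t ω - θstar) i) :=
        (hcoord_m i).comp ((hb_m t).mono (F.le t) le_rfl)
      have hxm : Measurable (fun ω => ξ (t+1) ω i) := (hcoord_m i).comp (hξ_m0 t)
      exact ((hIm.mul hbm).mul hxm).aestronglyMeasurable
    · intro ω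
      rw [Real.norm_eq_abs, abs_mul, abs_mul, abs_of_nonneg (hI_nonneg ω)]
      have h1 : |(θ t ω - θstar) i| ≤ ‖θ t ω - θstar‖ := stmt19_coord_abs_le_norm _ i
      have h2 : |ξ (t+1) ω i| ≤ ‖ξ (t+1) ω‖ := stmt19_coord_abs_le_norm _ i
      by_cases hω : ω ∈ A
      · have hIω : I ω = 1 := hImem ω hω
        have hWω : W t ω = ‖θ t ω - θstar‖ ^ 2 := by
          show I ω * _ = _; rw [hIω, one_mul]
        rw [hIω, one_mul, hWω]
        nlinarith [mul_le_mul h1 h2 (abs_nonneg (ξ (t+1) ω i)) (norm_nonneg (θ t ω - θstar)),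
          sq_nonneg (‖θ t ω - θstar‖ - ‖ξ (t+1) ω‖)]
      · have hIω : I ω = 0 := hInot ω hω
        rw [hIω, zero_mul, zero_mul]
        have := hW_nonneg t ω
        positivity
  -- coordinates of the noise are integrable with zero conditional mean
  have hξi_int : ∀ t (i : Fin d), Integrable (fun ω => ξ (t+1) ω i) μ := by
    intro t i
    have h := (EuclideanSpace.proj (𝕜 := ℝ) i).integrable_comp (hξ_int t)
    simpa [PiLp.proj_apply] using h
  have hξi0 : ∀ t (i : Fin d), μ[(fun ω => ξ (t+1) ω i)|F t] =ᵐ[μ] 0 := by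
    intro t i
    refine (ae_eq_condExp_of_forall_setIntegral_eq (F.le t) (hξi_int t i)
      (fun s _ _ => integrableOn_zero) (fun s hs _ => ?_) ?_).symm
    · have e1 : ∫ x in s, ξ (t+1) x i ∂μ
          = (EuclideanSpace.proj (𝕜 := ℝ) i) (∫ x in s, ξ (t+1) x ∂μ) := by
        have h := (EuclideanSpace.proj (𝕜 := ℝ) i).integral_comp_comm
          ((hξ_int t).restrict (s := s))
        simpa [PiLp.proj_apply] using h
      have e2 : ∫ x in s, ξ (t+1) x ∂μ = 0 := by
        rw [← setIntegral_condExp (F.le t) (hξ_int t) hs]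
        calc ∫ x in s, (μ[ξ (t+1)|F t]) x ∂μ
            = ∫ x in s, (0 : EuclideanSpace ℝ (Fin d)) ∂μ :=
              integral_congr_ae (ae_restrict_of_ae (hmean t))
          _ = 0 := by simp
      rw [e1, e2]
      simp
    · exact stronglyMeasurable_const.aestronglyMeasurable
  have hnoise_int : ∀ t, Integrable (fun ω => I ω * ‖ξ (t+1) ω‖ ^ 2) μ := by
    intro t
    refine (hξ_sq_int t).mono' ?_ (ae_of_all _ ?_)
    · exact ((hI_m.mono (F.le 0) le_rfl).mul ((hξ_m0 t).norm.pow_const 2)).aestronglyMeasurable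
    · intro ω
      rw [Real.norm_eq_abs, abs_mul, abs_of_nonneg (hI_nonneg ω), abs_of_nonneg (sq_nonneg _)]
      exact mul_le_of_le_one_left (sq_nonneg _) (hI_le_one ω)
  -- the cross term has zero conditional mean
  have hcross0 : ∀ t,
      μ[(fun ω => I ω * (inner ℝ (θ t ω - θstar) (ξ (t+1) ω) : ℝ))|F t] =ᵐ[μ] 0 := by
    intro t
    set g : Fin d → Ω → ℝ := fun i ω => (I ω * (θ t ω - θstar) i) * ξ (t+1) ω i with hg
    have hre : (fun ω => I ω * (inner ℝ (θ t ω - θstar) (ξ (t+1) ω) : ℝ)) =ᵐ[μ]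
        (∑ i : Fin d, g i) := by
      refine ae_of_all _ fun ω => ?_
      show I ω * (inner ℝ (θ t ω - θstar) (ξ (t+1) ω) : ℝ) = (∑ i : Fin d, g i) ω
      rw [Finset.sum_apply, stmt19_inner_eq_sum, Finset.mul_sum]
      exact Finset.sum_congr rfl fun i _ => (mul_assoc _ _ _).symm
    refine (condExp_congr_ae hre).trans ?_
    refine (condExp_finset_sum (fun i _ => hcross_int t i) (m := F t)).trans ?_
    have hterm : ∀ i : Fin d, μ[g i|F t] =ᵐ[μ] 0 := by
      intro i
      have hsm : StronglyMeasurable[F t] (fun ω => I ω * (θ t ω - θstar) i) := by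
        letI : MeasurableSpace Ω := F t
        exact ((hI_mt t).mul ((hcoord_m i).comp (hb_m t))).stronglyMeasurable
      have h := condExp_mul_of_stronglyMeasurable_left hsm (hcross_int t i) (hξi_int t i)
      refine EventuallyEq.trans ?_ (h.trans ?_)
      · exact condExp_congr_ae (ae_of_all _ fun ω => rfl)
      · filter_upwards [hξi0 t i] with ω hω
        have hω' : (μ[(fun ω => ξ (t+1) ω i)|F t]) ω = 0 := hω
        show (fun ω => I ω * (θ t ω - θstar) i) ω * (μ[(fun ω => ξ (t+1) ω i)|F t]) ω = _
        rw [hω', mul_zero]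
        rfl
    have hall : ∀ᵐ ω ∂μ, ∀ i : Fin d, (μ[g i|F t]) ω = 0 := ae_all_iff.2 fun i => hterm i
    filter_upwards [hall] with ω hω
    rw [Finset.sum_apply]
    exact Finset.sum_eq_zero fun i _ => hω i
  -- conditional bound on the noise
  have hnoise : ∀ t, μ[(fun ω => I ω * ‖ξ (t+1) ω‖ ^ 2)|F t] ≤ᵐ[μ]
      fun ω => σ ^ 2 * (1 + W t ω) := by
    intro t
    have hsm : StronglyMeasurable[F t] I := by
      letI : MeasurableSpace Ω := F t
      exact (hI_mt t).stronglyMeasurable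
    have h := condExp_mul_of_stronglyMeasurable_left hsm (hnoise_int t) (hξ_sq_int t)
    have h' : μ[(fun ω => I ω * ‖ξ (t+1) ω‖ ^ 2)|F t] =ᵐ[μ]
        I * μ[(fun ω => ‖ξ (t+1) ω‖ ^ 2)|F t] :=
      (condExp_congr_ae (ae_of_all _ fun ω => rfl)).trans h
    filter_upwards [h', hvar t] with ω h1 h2
    rw [h1]
    show I ω * (μ[fun ω => ‖ξ (t+1) ω‖ ^ 2|F t]) ω ≤ σ ^ 2 * (1 + W t ω)
    have h3 : I ω * (μ[fun ω => ‖ξ (t+1) ω‖ ^ 2|F t]) ω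
        ≤ I ω * (σ ^ 2 * (1 + ‖θ t ω - θstar‖ ^ 2)) :=
      mul_le_mul_of_nonneg_left h2 (hI_nonneg ω)
    have h4 : I ω * (σ ^ 2 * (1 + ‖θ t ω - θstar‖ ^ 2)) = σ ^ 2 * (I ω + W t ω) := by
      show _ = σ ^ 2 * (I ω + I ω * ‖θ t ω - θstar‖ ^ 2)
      ring
    have h5 := hI_le_one ω
    have h6 := hW_nonneg t ω
    nlinarith
  -- the key one-step conditional inequality
  have hstep : ∀ t, μ[W (t+1)|F t] ≤ᵐ[μ]
      fun ω => (1 + c * α t ^ 2) * W t ω + 2 * σ ^ 2 * α t ^ 2 := by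
    intro t
    set g1 : Ω → ℝ := fun ω => (1 + 2 * K ^ 2 * α t ^ 2) * W t ω with hg1
    set g2 : Ω → ℝ :=
      fun ω => (2 * α t) * (I ω * (inner ℝ (θ t ω - θstar) (ξ (t+1) ω) : ℝ)) with hg2
    set g3 : Ω → ℝ := fun ω => (2 * α t ^ 2) * (I ω * ‖ξ (t+1) ω‖ ^ 2) with hg3
    have hg1int : Integrable g1 μ := (hW_int t).const_mul _
    have hg2int : Integrable g2 μ := (hIinner_int t).const_mul _
    have hg3int : Integrable g3 μ := (hnoise_int t).const_mul _
    have hpt : ∀ ω, W (t+1) ω ≤ (g1 + (g2 + g3)) ω := by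
      intro ω
      show W (t+1) ω ≤ g1 ω + (g2 ω + g3 ω)
      by_cases hω : ω ∈ A
      · have hIω : I ω = 1 := hImem ω hω
        show I ω * ‖θ (t+1) ω - θstar‖ ^ 2 ≤
          (1 + 2 * K ^ 2 * α t ^ 2) * (I ω * ‖θ t ω - θstar‖ ^ 2) +
            ((2 * α t) * (I ω * (inner ℝ (θ t ω - θstar) (ξ (t+1) ω) : ℝ)) +
              (2 * α t ^ 2) * (I ω * ‖ξ (t+1) ω‖ ^ 2))
        rw [hIω]
        simp only [one_mul]
        have hb1 : θ (t+1) ω - θstar = (θ t ω - θstar) + α t • (f (θ t ω) + ξ (t+1) ω) := by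
          rw [hrec t ω]; abel
        have hexp : ‖θ (t+1) ω - θstar‖ ^ 2
            = ‖θ t ω - θstar‖ ^ 2
              + 2 * (inner ℝ (θ t ω - θstar) (α t • (f (θ t ω) + ξ (t+1) ω)) : ℝ)
              + ‖α t • (f (θ t ω) + ξ (t+1) ω)‖ ^ 2 := by
          rw [hb1]; exact norm_add_sq_real _ _
        have hinner1 : (inner ℝ (θ t ω - θstar) (α t • (f (θ t ω) + ξ (t+1) ω)) : ℝ)
            = α t * ((inner ℝ (θ t ω - θstar) (f (θ t ω)) : ℝ)
              + (inner ℝ (θ t ω - θstar) (ξ (t+1) ω) : ℝ)) := by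
          rw [real_inner_smul_right, inner_add_right]
        rw [hinner1] at hexp
        have hpas : α t * (inner ℝ (θ t ω - θstar) (f (θ t ω)) : ℝ) ≤ 0 :=
          mul_nonpos_of_nonneg_of_nonpos (hα t).1.le (hpassive (θ t ω))
        have hsm2 : ‖α t • (f (θ t ω) + ξ (t+1) ω)‖ ^ 2
            ≤ α t ^ 2 * (2 * (K ^ 2 * ‖θ t ω - θstar‖ ^ 2) + 2 * ‖ξ (t+1) ω‖ ^ 2) := by
          rw [norm_smul, Real.norm_of_nonneg (hα t).1.le, mul_pow]
          have h2 : ‖f (θ t ω) + ξ (t+1) ω‖ ^ 2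
              ≤ 2 * ‖f (θ t ω)‖ ^ 2 + 2 * ‖ξ (t+1) ω‖ ^ 2 := by
            have h21 := norm_add_le (f (θ t ω)) (ξ (t+1) ω)
            nlinarith [norm_nonneg (f (θ t ω)), norm_nonneg (ξ (t+1) ω),
              sq_nonneg (‖f (θ t ω)‖ - ‖ξ (t+1) ω‖),
              norm_nonneg (f (θ t ω) + ξ (t+1) ω)]
          have h3 := hfsq (θ t ω)
          nlinarith [sq_nonneg (α t)]
        linarith [hexp, hpas, hsm2]
      · have hIω : I ω = 0 := hInot ω hω
        show I ω * ‖θ (t+1) ω - θstar‖ ^ 2 ≤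
          (1 + 2 * K ^ 2 * α t ^ 2) * (I ω * ‖θ t ω - θstar‖ ^ 2) +
            ((2 * α t) * (I ω * (inner ℝ (θ t ω - θstar) (ξ (t+1) ω) : ℝ)) +
              (2 * α t ^ 2) * (I ω * ‖ξ (t+1) ω‖ ^ 2))
        rw [hIω]
        simp
    have h1 : μ[W (t+1)|F t] ≤ᵐ[μ] μ[(g1 + (g2 + g3))|F t] :=
      condExp_mono (hW_int (t+1)) (hg1int.add (hg2int.add hg3int)) (ae_of_all _ hpt)
    have h2 : μ[(g1 + (g2 + g3))|F t] =ᵐ[μ] μ[g1|F t] + (μ[g2|F t] + μ[g3|F t]) :=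
      (condExp_add hg1int (hg2int.add hg3int) (F t)).trans
        (EventuallyEq.rfl.add (condExp_add hg2int hg3int (F t)))
    have hg1sm : StronglyMeasurable[F t] g1 := by
      letI : MeasurableSpace Ω := F t
      exact (measurable_const.mul (hW_m t)).stronglyMeasurable
    have e1 : μ[g1|F t] = g1 := condExp_of_stronglyMeasurable (F.le t) hg1sm hg1int
    have e2 : μ[g2|F t] =ᵐ[μ] (0 : Ω → ℝ) := by
      have h := condExp_smul (μ := μ) (m := F t) ((2 * α t : ℝ))
        (fun ω => I ω * (inner ℝ (θ t ω - θstar) (ξ (t+1) ω) : ℝ))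
      refine ((condExp_congr_ae (ae_of_all _ fun ω => rfl)).trans h).trans ?_
      filter_upwards [hcross0 t] with ω hω
      have hω' : (μ[(fun ω => I ω * (inner ℝ (θ t ω - θstar) (ξ (t+1) ω) : ℝ))|F t]) ω = 0 := hω
      show (2 * α t : ℝ) •
        (μ[(fun ω => I ω * (inner ℝ (θ t ω - θstar) (ξ (t+1) ω) : ℝ))|F t]) ω = (0 : Ω → ℝ) ω
      rw [hω']
      simp
    have e3 : μ[g3|F t] ≤ᵐ[μ] fun ω => (2 * α t ^ 2) * (σ ^ 2 * (1 + W t ω)) := by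
      have h := condExp_smul (μ := μ) (m := F t) ((2 * α t ^ 2 : ℝ))
        (fun ω => I ω * ‖ξ (t+1) ω‖ ^ 2)
      refine ((condExp_congr_ae (ae_of_all _ fun ω => rfl)).trans h).le.trans ?_
      filter_upwards [hnoise t] with ω hω
      show (2 * α t ^ 2 : ℝ) • (μ[(fun ω => I ω * ‖ξ (t+1) ω‖ ^ 2)|F t]) ω
        ≤ (2 * α t ^ 2) * (σ ^ 2 * (1 + W t ω))
      have hcoef : (0:ℝ) ≤ 2 * α t ^ 2 := by positivity
      have := mul_le_mul_of_nonneg_left hω hcoef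
      simpa [smul_eq_mul] using this
    refine h1.trans (h2.le.trans ?_)
    rw [e1]
    filter_upwards [e2, e3] with ω h2ω h3ω
    have h2ω' : (μ[g2|F t]) ω = 0 := h2ω
    show g1 ω + ((μ[g2|F t]) ω + (μ[g3|F t]) ω)
      ≤ (1 + c * α t ^ 2) * W t ω + 2 * σ ^ 2 * α t ^ 2
    rw [h2ω', hc]
    have hg1ω : g1 ω = (1 + 2 * K ^ 2 * α t ^ 2) * W t ω := rfl
    rw [hg1ω]
    have hg3ω : (μ[g3|F t]) ω ≤ (2 * α t ^ 2) * (σ ^ 2 * (1 + W t ω)) := h3ω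
    nlinarith [hg3ω]
  -- the compensating product and tail sums
  set P : ℕ → ℝ := fun t => ∏ s ∈ Finset.range t, (1 + c * α s ^ 2) with hP
  have hPsucc : ∀ t, P (t+1) = P t * (1 + c * α t ^ 2) := fun t => Finset.prod_range_succ _ _
  have hP1 : ∀ t, 1 ≤ P t := by
    intro t
    induction t with
    | zero => simp [hP]
    | succ t ih =>
      rw [hPsucc t]
      nlinarith [mul_nonneg hc0 (sq_nonneg (α t))]
  have hPpos : ∀ t, 0 < P t := fun t => lt_of_lt_of_le one_pos (hP1 t)
  have hSnn : 0 ≤ S := tsum_nonneg fun t => sq_nonneg _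
  have hPle : ∀ t, P t ≤ Real.exp (c * S) := by
    intro t
    have h1 : P t ≤ ∏ s ∈ Finset.range t, Real.exp (c * α s ^ 2) := by
      apply Finset.prod_le_prod
      · intro s _; positivity
      · intro s _
        rw [add_comm]
        exact Real.add_one_le_exp _
    have h2 : ∏ s ∈ Finset.range t, Real.exp (c * α s ^ 2)
        = Real.exp (∑ s ∈ Finset.range t, c * α s ^ 2) := (Real.exp_sum _ _).symm
    have h3 : ∑ s ∈ Finset.range t, c * α s ^ 2 ≤ c * S := by
      rw [← Finset.mul_sum]
      exact mul_le_mul_of_nonneg_left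
        (hα2.sum_le_tsum _ (fun i _ => sq_nonneg _)) hc0
    calc P t ≤ _ := h1
      _ = _ := h2
      _ ≤ Real.exp (c * S) := Real.exp_le_exp.2 h3
  set R : ℕ → ℝ := fun t => ∑' s, α (s + t) ^ 2 with hR
  have hRs : ∀ t, Summable (fun s => α (s + t) ^ 2) := fun t => (summable_nat_add_iff t).2 hα2
  have hRnn : ∀ t, 0 ≤ R t := fun t => tsum_nonneg fun s => sq_nonneg _
  have hRrec : ∀ t, R t = α t ^ 2 + R (t+1) := by
    intro t
    have h := (hRs t).tsum_eq_zero_add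
    simp only [zero_add] at h
    rw [hR]
    simp only []
    rw [h]
    congr 1
    apply tsum_congr
    intro s
    have hnat : s + 1 + t = s + (t + 1) := by omega
    rw [hnat]
  -- the nonnegative supermartingale
  set M : ℕ → Ω → ℝ := fun t ω => (P t)⁻¹ * W t ω + 2 * σ ^ 2 * R t with hM
  have hM_adapted : Adapted F M := by
    intro t
    letI : MeasurableSpace Ω := F t
    exact ((measurable_const.mul (hW_m t)).add_const _)
  have hM_int : ∀ t, Integrable (M t) μ := fun t =>
    ((hW_int t).const_mul _).add (integrable_const _)
  have hM_nonneg : ∀ t ω, 0 ≤ M t ω := fun t ω =>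
    add_nonneg (mul_nonneg (inv_nonneg.2 (hPpos t).le) (hW_nonneg t ω))
      (mul_nonneg (by positivity) (hRnn t))
  have hM_step : ∀ t, μ[M (t+1)|F t] ≤ᵐ[μ] M t := by
    intro t
    have hd1 : μ[(fun ω => (P (t+1))⁻¹ * W (t+1) ω)|F t]
        =ᵐ[μ] fun ω => (P (t+1))⁻¹ * (μ[W (t+1)|F t]) ω := by
      refine (condExp_congr_ae (ae_of_all _ fun ω => rfl)).trans
        ((condExp_smul (μ := μ) (m := F t) (((P (t+1))⁻¹ : ℝ)) (W (t+1))).trans ?_)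
      exact ae_of_all _ fun ω => rfl
    have hd2 : μ[(fun _ : Ω => 2 * σ ^ 2 * R (t+1))|F t] = fun _ => 2 * σ ^ 2 * R (t+1) :=
      condExp_const (F.le t) _
    have hd : μ[M (t+1)|F t] =ᵐ[μ]
        fun ω => (P (t+1))⁻¹ * (μ[W (t+1)|F t]) ω + 2 * σ ^ 2 * R (t+1) := by
      refine (condExp_congr_ae (ae_of_all _ fun ω => rfl)).trans
        ((condExp_add ((hW_int (t+1)).const_mul _) (integrable_const _) (F t)).trans ?_)
      filter_upwards [hd1] with ω h1
      rw [Pi.add_apply, h1, hd2]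
    refine hd.le.trans ?_
    filter_upwards [hstep t] with ω hω
    have hPp := hPpos (t+1)
    have h1 : (P (t+1))⁻¹ * (μ[W (t+1)|F t]) ω
        ≤ (P (t+1))⁻¹ * ((1 + c * α t ^ 2) * W t ω + 2 * σ ^ 2 * α t ^ 2) :=
      mul_le_mul_of_nonneg_left hω (by positivity)
    have h2 : (P (t+1))⁻¹ * ((1 + c * α t ^ 2) * W t ω) = (P t)⁻¹ * W t ω := by
      rw [hPsucc t]
      have hq : (0:ℝ) < 1 + c * α t ^ 2 := by nlinarith [mul_nonneg hc0 (sq_nonneg (α t))]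
      field_simp
    have h3 : (P (t+1))⁻¹ * (2 * σ ^ 2 * α t ^ 2) ≤ 2 * σ ^ 2 * α t ^ 2 := by
      apply mul_le_of_le_one_left (by positivity)
      exact inv_le_one_of_one_le₀ (hP1 (t+1))
    have h5 : 2 * σ ^ 2 * R t = 2 * σ ^ 2 * α t ^ 2 + 2 * σ ^ 2 * R (t+1) := by
      rw [hRrec t]; ring
    show (P (t+1))⁻¹ * (μ[W (t+1)|F t]) ω + 2 * σ ^ 2 * R (t+1)
      ≤ (P t)⁻¹ * W t ω + 2 * σ ^ 2 * R t
    nlinarith [h1, h2, h3, h5]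
  have hsuper : Supermartingale M F μ := supermartingale_nat hM_adapted.stronglyAdapted hM_int hM_step
  -- L¹ boundedness and a.e. convergence
  have hEle : ∀ t, ∫ ω, M t ω ∂μ ≤ ∫ ω, M 0 ω ∂μ := by
    intro t
    have h := hsuper.2.1 0 t (Nat.zero_le t)
    calc ∫ ω, M t ω ∂μ = ∫ ω, (μ[M t|F 0]) ω ∂μ := (integral_condExp (F.le 0) (f := M t)).symm
      _ ≤ ∫ ω, M 0 ω ∂μ := integral_mono_ae integrable_condExp (hM_int 0) h
  set RR : NNReal := (∫ ω, M 0 ω ∂μ).toNNReal with hRR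
  have hbdd : ∀ t, eLpNorm ((-M) t) 1 μ ≤ (RR : ENNReal) := by
    intro t
    have h0 : eLpNorm ((-M) t) 1 μ = eLpNorm (M t) 1 μ := by
      have : (-M) t = -(M t) := rfl
      rw [this, eLpNorm_neg]
    rw [h0]
    have h1 : eLpNorm (M t) 1 μ = ENNReal.ofReal (∫ ω, ‖M t ω‖ ∂μ) := by
      rw [eLpNorm_one_eq_lintegral_enorm, ← ofReal_integral_norm_eq_lintegral_enorm (hM_int t)]
    rw [h1]
    have h2 : ∫ ω, ‖M t ω‖ ∂μ = ∫ ω, M t ω ∂μ :=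
      integral_congr_ae (ae_of_all _ fun ω => Real.norm_of_nonneg (hM_nonneg t ω))
    rw [h2]
    refine le_trans (ENNReal.ofReal_le_ofReal (hEle t)) ?_
    rw [hRR]
    rfl
  have hconv := hsuper.neg.exists_ae_tendsto_of_bdd hbdd
  -- conclusion
  filter_upwards [hconv] with ω hω hmem
  obtain ⟨l, hl⟩ := hω
  have hl' : Tendsto (fun t => M t ω) atTop (nhds (-l)) := by
    have h := hl.neg
    simpa using h
  obtain ⟨B, hB⟩ := hl'.bddAbove_range
  have hωA : ω ∈ A := hmem
  refine ⟨‖θstar‖ + Real.sqrt (Real.exp (c * S) * max B 0), fun t => ?_⟩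
  have hMB : M t ω ≤ max B 0 := le_max_of_le_left (hB (Set.mem_range_self t))
  have hWM : W t ω ≤ P t * M t ω := by
    have h1 : (P t)⁻¹ * W t ω ≤ M t ω := by
      nlinarith [hRnn t, hσ2]
    calc W t ω = P t * ((P t)⁻¹ * W t ω) := by
          rw [← mul_assoc, mul_inv_cancel₀ (hPpos t).ne', one_mul]
      _ ≤ P t * M t ω := mul_le_mul_of_nonneg_left h1 (hPpos t).le
  have hWb : W t ω ≤ Real.exp (c * S) * max B 0 :=
    hWM.trans (mul_le_mul (hPle t) hMB (hM_nonneg t ω) (Real.exp_nonneg _))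
  have hzω : ‖θ t ω - θstar‖ ^ 2 ≤ Real.exp (c * S) * max B 0 := by
    have hIω : I ω = 1 := hImem ω hωA
    have hWe : W t ω = ‖θ t ω - θstar‖ ^ 2 := by
      show I ω * _ = _
      rw [hIω, one_mul]
    rw [← hWe]
    exact hWb
  have h6 : ‖θ t ω - θstar‖ ≤ Real.sqrt (Real.exp (c * S) * max B 0) :=
    Real.le_sqrt_of_sq_le hzω
  have h7 : θstar + (θ t ω - θstar) = θ t ω := by abel
  calc ‖θ t ω‖ = ‖θstar + (θ t ω - θstar)‖ := by rw [h7]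
    _ ≤ ‖θstar‖ + ‖θ t ω - θstar‖ := norm_add_le _ _
    _ ≤ _ := by linarith
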